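/- Let W be a finite set of n pages, let E be a finite set of entities, and let occ : E → Finset W assign to each entity the nonempty set of pages in which it occurs. Let k be an integer with 0 < k < n, and draw P' uniformly at random among the k-element subsets of W. Suppose there exists an entity e₀ ∈ E with |occ(e₀)| ≥ 2 (i.e., some entity occurs in strictly more than one page). Then the expected number of entities e ∈ E whose occurrence set occ(e) intersects P' is strictly greater than (k/n)·|E|. -/

import Mathlib

open Finset

/-- **Coverage theorem (expectation form).**
Let `W` be a finite set of `n` pages, `E` a finite set of entities, and
`occ : ε → Finset α` assign to each entity the nonempty set of pages (within `W`)
in which it occurs.  Let `0 < k < n` and draw `P'` uniformly among the `k`-element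
subsets of `W`.  If some entity `e₀ ∈ E` occurs in at least two pages, then the
expected number of entities whose occurrence set intersects `P'` is strictly
greater than `(k/n) * |E|`. -/
theorem expected_covered_entities_gt
    {α ε : Type*} [DecidableEq α]
    (W : Finset α) (E : Finset ε) (occ : ε → Finset α)
    (n k : ℕ) (hW : W.card = n) (hk0 : 0 < k) (hkn : k < n)
    (hocc_sub : ∀ e ∈ E, occ e ⊆ W)
    (hocc_ne : ∀ e ∈ E, (occ e).Nonempty)
    (e₀ : ε) (he₀ : e₀ ∈ E) (he₀2 : 2 ≤ (occ e₀).card) :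
    ((∑ S ∈ W.powersetCard k,
        (E.filter (fun e => (occ e ∩ S).Nonempty)).card : ℝ) / (n.choose k))
      > ((k : ℝ) / n) * E.card := by
  classical
  have hn0 : 0 < n := lt_trans hk0 hkn
  have hkle : k ≤ n := le_of_lt hkn
  -- count for a fixed entity
  have hcount : ∀ e ∈ E,
      ((W.powersetCard k).filter (fun S => (occ e ∩ S).Nonempty)).card
        = n.choose k - (n - (occ e).card).choose k := by
    intro e he
    have hcompl : (W.powersetCard k).filter (fun S => ¬ (occ e ∩ S).Nonempty)
        = (W \ occ e).powersetCard k := by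
      ext S
      simp only [Finset.mem_filter, Finset.mem_powersetCard,
        Finset.not_nonempty_iff_eq_empty, ← Finset.disjoint_iff_inter_eq_empty,
        Finset.subset_sdiff]
      constructor
      · rintro ⟨⟨hSW, hcard⟩, hd⟩
        exact ⟨⟨hSW, hd.symm⟩, hcard⟩
      · rintro ⟨⟨hSW, hd⟩, hcard⟩
        exact ⟨⟨hSW, hcard⟩, hd.symm⟩
    have htot := Finset.card_filter_add_card_filter_not
      (s := W.powersetCard k) (p := fun S => (occ e ∩ S).Nonempty)
    rw [hcompl] at htot
    have h1 : (W.powersetCard k).card = n.choose k := by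
      rw [Finset.card_powersetCard, hW]
    have h2 : ((W \ occ e).powersetCard k).card = (n - (occ e).card).choose k := by
      rw [Finset.card_powersetCard, Finset.card_sdiff_of_subset (hocc_sub e he), hW]
    omega
  -- swap sums
  have hswap : ∑ S ∈ W.powersetCard k,
      (E.filter (fun e => (occ e ∩ S).Nonempty)).card
      = ∑ e ∈ E, ((W.powersetCard k).filter (fun S => (occ e ∩ S).Nonempty)).card := by
    simp only [Finset.card_filter]
    rw [Finset.sum_comm]
  set c := (n - 1).choose (k - 1) with hc
  -- Pascal : C(n,k) = C(n-1,k-1) + C(n-1,k)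
  have hpascal : n.choose k = c + (n - 1).choose k := by
    have := Nat.choose_succ_succ (n - 1) (k - 1)
    rw [show (n-1).succ = n by omega, show (k-1).succ = k by omega] at this
    rw [this, hc]
  -- per-entity lower bound
  have hlb : ∀ e ∈ E,
      c ≤ ((W.powersetCard k).filter (fun S => (occ e ∩ S).Nonempty)).card := by
    intro e he
    rw [hcount e he]
    have hm : 1 ≤ (occ e).card := Finset.card_pos.mpr (hocc_ne e he)
    have hmono : (n - (occ e).card).choose k ≤ (n - 1).choose k :=
      Nat.choose_le_choose k (by omega)
    have hle : (n - 1).choose k ≤ n.choose k :=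
      Nat.choose_le_choose k (by omega)
    omega
  -- strict for e₀
  have hstrict : c <
      ((W.powersetCard k).filter (fun S => (occ e₀ ∩ S).Nonempty)).card := by
    rw [hcount e₀ he₀]
    have hmono : (n - (occ e₀).card).choose k ≤ (n - 2).choose k :=
      Nat.choose_le_choose k (by omega)
    have h2 : 2 ≤ n := by omega
    have hpascal2 : (n - 1).choose k = (n - 2).choose (k - 1) + (n - 2).choose k := by
      have := Nat.choose_succ_succ (n - 2) (k - 1)
      have e1 : n - 2 + 1 = n - 1 := by omega
      have e2 : k - 1 + 1 = k := by omega
      rw [show (n-2).succ = n - 1 by omega, show (k-1).succ = k by omega] at this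
      exact this
    have hpos : 0 < (n - 2).choose (k - 1) := Nat.choose_pos (by omega)
    have hle : (n - 1).choose k ≤ n.choose k := Nat.choose_le_choose k (by omega)
    omega
  -- sum lower bound
  have hsum : E.card * c < ∑ e ∈ E,
      ((W.powersetCard k).filter (fun S => (occ e ∩ S).Nonempty)).card := by
    calc E.card * c = ∑ _e ∈ E, c := by rw [Finset.sum_const, smul_eq_mul]
    _ < _ := Finset.sum_lt_sum hlb ⟨e₀, he₀, hstrict⟩
  set Sm := ∑ e ∈ E, ((W.powersetCard k).filter (fun S => (occ e ∩ S).Nonempty)).card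
    with hSm
  -- identity: n * c = n.choose k * k
  have hid : n * c = n.choose k * k := by
    have := Nat.add_one_mul_choose_eq (n - 1) (k - 1)
    rw [show n - 1 + 1 = n by omega, show k - 1 + 1 = k by omega] at this
    exact this
  -- nat inequality
  have hnat : k * E.card * n.choose k < Sm * n := by
    have h1 : k * E.card * n.choose k = n * (E.card * c) := by
      rw [show n * (E.card * c) = E.card * (n * c) by ring, hid]; ring
    rw [h1, mul_comm Sm n]
    exact Nat.mul_lt_mul_of_pos_left hsum hn0
  -- conclude over ℝ
  have hCpos : (0:ℝ) < (n.choose k : ℝ) := by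
    exact_mod_cast Nat.choose_pos hkle
  have hnpos : (0:ℝ) < (n : ℝ) := by exact_mod_cast hn0
  have hcast : (∑ S ∈ W.powersetCard k,
      ((E.filter (fun e => (occ e ∩ S).Nonempty)).card : ℝ)) = (Sm : ℝ) := by
    rw [← Nat.cast_sum, hswap]
  rw [gt_iff_lt, div_mul_eq_mul_div, div_lt_div_iff₀ hnpos hCpos, hcast]
  calc ((k:ℝ) * E.card) * n.choose k = ((k * E.card * n.choose k : ℕ) : ℝ) := by
        push_cast; ring
    _ < ((Sm * n : ℕ) : ℝ) := by exact_mod_cast hnat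
    _ = (Sm : ℝ) * n := by push_cast; ring
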